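/- Suppose g solves the variant of the q-hypergeometric equation of degree three with parameters (h₁,h₂,h₃,l₁,l₂,l₃,α,t₁,t₂,t₃). Divide the equation by −q^{h₃+1/2}t₃ and let t₃ → ∞ with x fixed. Then the limiting equation is (x−q^{h₁+1/2}t₁)(x−q^{h₂+1/2}t₂)g(x/q) + q^{2α+l₃−h₃}(x−q^{l₁−1/2}t₁)(x−q^{l₂−1/2}t₂)g(qx) − [(q^{α}+q^{α−h₃+l₃})x² − q^{(h₁+h₂+l₁+l₂+2α−h₃+l₃)/2}{(q^{−h₁}+q^{−l₁})t₂ + (q^{−h₂}+q^{−l₂})t₁}x + q^{(h₁+h₂+l₁+l₂+2α−h₃+l₃)/2}(q^{1/2}+q^{−1/2})t₁t₂]g(x) = 0, which is the variant of the q-hypergeometric equation of degree two with {α₁,α₂} = {α, α−h₃+l₃}. Formally: the coefficient polynomials of the degree-three equation, divided by −q^{h₃+1/2}t₃, converge as t₃ → ∞ (coefficientwise in x) to the coefficient polynomials of the degree-two equation with these parameters. -/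

import Mathlib

open Filter Bornology

/-- Real power `q^e` of a positive real base, viewed as a complex number. -/
noncomputable def qr (q e : ℝ) : ℂ := ((q ^ e : ℝ) : ℂ)

lemma qr_mul {q : ℝ} (hq0 : 0 < q) (a b : ℝ) : qr q a * qr q b = qr q (a + b) := by
  simp [qr, Real.rpow_add hq0]

lemma qr_ne_zero {q : ℝ} (hq0 : 0 < q) (a : ℝ) : qr q a ≠ 0 := by
  simp [qr, (Real.rpow_pos_of_pos hq0 a).ne']

lemma tendsto_aux {c : ℂ} (hc : c ≠ 0) (L A : ℂ) (N : ℂ → ℂ)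
    (h : ∀ t : ℂ, N t = L * (-c * t) + A) :
    Filter.Tendsto (fun t : ℂ => N t / (-c * t)) (Bornology.cobounded ℂ) (nhds L) := by
  have h1 : Filter.Tendsto (fun t : ℂ => L + (A * (-c)⁻¹) * t⁻¹) (cobounded ℂ)
      (nhds (L + (A * (-c)⁻¹) * 0)) :=
    tendsto_const_nhds.add (tendsto_inv₀_cobounded.const_mul _)
  rw [mul_zero, add_zero] at h1
  refine Filter.Tendsto.congr' ?_ h1
  filter_upwards [eventually_ne_cobounded (0:ℂ)] with t ht
  rw [h t]
  field_simp
  ring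


/-- Degeneration of the variant of the q-hypergeometric equation of degree three to the
variant of degree two: dividing the three coefficient polynomials by `-q^{h₃+1/2}t₃` and
letting `t₃ → ∞` (pointwise in `x`, equivalently coefficientwise), they converge to the
coefficient polynomials of the degree-two equation with `{α₁,α₂} = {α, α-h₃+l₃}`. -/
theorem degree_three_to_degree_two_limit (q : ℝ) (hq0 : 0 < q) (hq1 : q < 1)
    (h₁ h₂ h₃ l₁ l₂ l₃ α : ℝ) (t₁ t₂ : ℂ) (ht₁ : t₁ ≠ 0) (ht₂ : t₂ ≠ 0) (x : ℂ) :
    Filter.Tendsto (fun t₃ : ℂ =>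
        (x - qr q (h₁ + 1/2) * t₁) * (x - qr q (h₂ + 1/2) * t₂)
          * (x - qr q (h₃ + 1/2) * t₃) / (-(qr q (h₃ + 1/2)) * t₃))
      (Bornology.cobounded ℂ)
      (nhds ((x - qr q (h₁ + 1/2) * t₁) * (x - qr q (h₂ + 1/2) * t₂)))
    ∧
    Filter.Tendsto (fun t₃ : ℂ =>
        qr q (2 * α + 1) * (x - qr q (l₁ - 1/2) * t₁) * (x - qr q (l₂ - 1/2) * t₂)
          * (x - qr q (l₃ - 1/2) * t₃) / (-(qr q (h₃ + 1/2)) * t₃))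
      (Bornology.cobounded ℂ)
      (nhds (qr q (2 * α + l₃ - h₃) * (x - qr q (l₁ - 1/2) * t₁)
        * (x - qr q (l₂ - 1/2) * t₂)))
    ∧
    Filter.Tendsto (fun t₃ : ℂ =>
        qr q α * (-((q : ℂ) + 1) * x ^ 3
          + qr q (1/2) * ((qr q h₁ + qr q l₁) * t₁ + (qr q h₂ + qr q l₂) * t₂
              + (qr q h₃ + qr q l₃) * t₃) * x ^ 2
          - qr q ((h₁ + h₂ + h₃ + l₁ + l₂ + l₃ + 1) / 2)
              * ((qr q (-h₁) + qr q (-l₁)) * t₂ * t₃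
                + (qr q (-h₂) + qr q (-l₂)) * t₁ * t₃
                + (qr q (-h₃) + qr q (-l₃)) * t₁ * t₂) * x
          + qr q ((h₁ + h₂ + h₃ + l₁ + l₂ + l₃) / 2) * ((q : ℂ) + 1) * t₁ * t₂ * t₃)
          / (-(qr q (h₃ + 1/2)) * t₃))
      (Bornology.cobounded ℂ)
      (nhds (-((qr q α + qr q (α - h₃ + l₃)) * x ^ 2
        - qr q ((h₁ + h₂ + l₁ + l₂ + 2 * α - h₃ + l₃) / 2)
            * ((qr q (-h₁) + qr q (-l₁)) * t₂ + (qr q (-h₂) + qr q (-l₂)) * t₁) * x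
        + qr q ((h₁ + h₂ + l₁ + l₂ + 2 * α - h₃ + l₃) / 2)
            * (qr q (1/2) + qr q (-1/2)) * t₁ * t₂))) := by
  have hc : qr q (h₃ + 1/2) ≠ 0 := qr_ne_zero hq0 _
  have hqC : ((q:ℂ)) = qr q 1 := by simp [qr]
  have key2 : qr q (2 * α + l₃ - h₃) * qr q (h₃ + 1/2)
      = qr q (2 * α + 1) * qr q (l₃ - 1/2) := by
    simp only [qr_mul hq0]; ring_nf
  have k2a : qr q α * qr q (1/2) * qr q h₃ = qr q (h₃ + 1/2) * qr q α := by
    simp only [qr_mul hq0]; ring_nf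
  have k2b : qr q α * qr q (1/2) * qr q l₃ = qr q (h₃ + 1/2) * qr q (α - h₃ + l₃) := by
    simp only [qr_mul hq0]; ring_nf
  have k3 : qr q α * qr q ((h₁ + h₂ + h₃ + l₁ + l₂ + l₃ + 1) / 2)
      = qr q (h₃ + 1/2) * qr q ((h₁ + h₂ + l₁ + l₂ + 2 * α - h₃ + l₃) / 2) := by
    simp only [qr_mul hq0]; ring_nf
  have k4 : qr q α * qr q ((h₁ + h₂ + h₃ + l₁ + l₂ + l₃) / 2) * (qr q 1 + 1)
      = qr q (h₃ + 1/2) * qr q ((h₁ + h₂ + l₁ + l₂ + 2 * α - h₃ + l₃) / 2)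
        * (qr q (1/2) + qr q (-1/2)) := by
    simp only [mul_add, mul_one, qr_mul hq0]; ring_nf
  refine ⟨?_, ?_, ?_⟩
  · refine tendsto_aux hc _
      ((x - qr q (h₁ + 1/2) * t₁) * (x - qr q (h₂ + 1/2) * t₂) * x) _ fun t => ?_
    ring
  · refine tendsto_aux hc _
      (qr q (2 * α + 1) * (x - qr q (l₁ - 1/2) * t₁) * (x - qr q (l₂ - 1/2) * t₂) * x) _
      fun t => ?_
    linear_combination (t * (x - qr q (l₁ - 1/2) * t₁) * (x - qr q (l₂ - 1/2) * t₂)) * key2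
  · refine tendsto_aux hc _
      (qr q α * (-((q : ℂ) + 1) * x ^ 3
          + qr q (1/2) * ((qr q h₁ + qr q l₁) * t₁ + (qr q h₂ + qr q l₂) * t₂) * x ^ 2
          - qr q ((h₁ + h₂ + h₃ + l₁ + l₂ + l₃ + 1) / 2)
              * ((qr q (-h₃) + qr q (-l₃)) * t₁ * t₂) * x)) _ fun t => ?_
    rw [hqC]
    linear_combination (t * x ^ 2) * k2a + (t * x ^ 2) * k2b
      - (t * x * ((qr q (-h₁) + qr q (-l₁)) * t₂ + (qr q (-h₂) + qr q (-l₂)) * t₁)) * k3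
      + (t * t₁ * t₂) * k4
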